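/- Let (Z, 𝒵, μ) be a measure space, let B, q ≥ 2 be integers, and let b₁,...,b_q be nonempty subsets of {1,...,B} such that their union is {1,...,B} and every element k ∈ {1,...,B} belongs to exactly two of the sets b_i. Let F₁,...,F_q be functions with F_i ∈ L²(μ^{|b_i|}). Then ∫_{Z^B} ∏_{i=1}^q |F_i(z_{b_i})| dμ(z₁)···dμ(z_B) ≤ ∏_{i=1}^q ‖F_i‖_{L²(μ^{|b_i|})}, where z_{b_i} denotes the subvector of (z₁,...,z_B) with indices in b_i. -/

import Mathlib

open MeasureTheory Function
open scoped ENNReal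

theorem gcs_core {Z : Type*} [MeasurableSpace Z] (μ : Measure Z) [SigmaFinite μ]
    {ι : Type*} [Fintype ι] [DecidableEq ι] {q : ℕ}
    (s : Finset ι) :
    ∀ (b : Fin q → Finset ι) (f : Fin q → (ι → Z) → ℝ≥0∞),
      (∀ i, Measurable (f i)) →
      (∀ i (x y : ι → Z), (∀ k ∈ b i, x k = y k) → f i x = f i y) →
      (∀ i, b i ⊆ s) →
      (∀ k ∈ s, (Finset.univ.filter fun i => k ∈ b i).card = 2) →
      ∀ z, (lmarginal (fun _ => μ) s (fun y => ∏ i, f i y)) z ≤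
        ∏ i, ((lmarginal (fun _ => μ) (b i) (fun y => f i y ^ (2:ℝ))) z) ^ (1/2 : ℝ) := by
  induction s using Finset.strongInduction with
  | _ s ih =>
    intro b f hmf hdep hsub htwo z
    rcases s.eq_empty_or_nonempty with rfl | ⟨k, hk⟩
    · -- base case
      have hb : ∀ i, b i = ∅ := fun i => Finset.subset_empty.mp (hsub i)
      simp only [lmarginal_empty]
      apply le_of_eq
      refine Finset.prod_congr rfl fun i _ => ?_
      rw [hb i, lmarginal_empty, ← ENNReal.rpow_mul]
      norm_num
    · -- inductive step
      obtain ⟨i₀, i₁, hi01, hpair⟩ := Finset.card_eq_two.mp (htwo k hk)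
      have hmemiff : ∀ i, k ∈ b i ↔ i = i₀ ∨ i = i₁ := by
        intro i
        constructor
        · intro h
          have hmem : i ∈ Finset.univ.filter fun j => k ∈ b j :=
            Finset.mem_filter.mpr ⟨Finset.mem_univ i, h⟩
          rw [hpair] at hmem; simpa using hmem
        · rintro (rfl | rfl)
          · have : i ∈ Finset.univ.filter fun j => k ∈ b j := by rw [hpair]; simp
            exact (Finset.mem_filter.mp this).2
          · have : i ∈ Finset.univ.filter fun j => k ∈ b j := by rw [hpair]; simp
            exact (Finset.mem_filter.mp this).2
      have hk0 : k ∈ b i₀ := (hmemiff i₀).mpr (Or.inl rfl)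
      have hk1 : k ∈ b i₁ := (hmemiff i₁).mpr (Or.inr rfl)
      set g : Fin q → (ι → Z) → ℝ≥0∞ := fun i =>
        if i = i₀ ∨ i = i₁ then
          fun x => (lmarginal (fun _ => μ) {k} (fun y => f i y ^ (2:ℝ)) x) ^ (1/2:ℝ)
        else f i with hgdef
      set b' : Fin q → Finset ι := fun i =>
        if i = i₀ ∨ i = i₁ then (b i).erase k else b i with hb'def
      have hprod : Measurable (fun y => ∏ i, f i y) :=
        Finset.measurable_prod _ fun i _ => hmf i
      have hsplit : ∀ (h : Fin q → ℝ≥0∞),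
          ∏ i, h i = (∏ i ∈ Finset.univ \ {i₀, i₁}, h i) * (h i₀ * h i₁) := by
        intro h
        rw [← Finset.prod_pair hi01, Finset.prod_sdiff (Finset.subset_univ _)]
      have hnotmem : ∀ i ∈ Finset.univ \ ({i₀, i₁} : Finset (Fin q)), ¬(i = i₀ ∨ i = i₁) := by
        intro i hi
        simp only [Finset.mem_sdiff, Finset.mem_insert, Finset.mem_singleton] at hi
        exact hi.2
      -- key pointwise Cauchy-Schwarz step
      have key : (fun x => ∫⁻ t, (fun y => ∏ i, f i y) (update x k t) ∂μ)
          ≤ fun x => ∏ i, g i x := by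
        intro x
        have hrest : ∀ (t : Z), ∀ i ∈ Finset.univ \ ({i₀, i₁} : Finset (Fin q)),
            f i (update x k t) = f i x := by
          intro t i hi
          apply hdep
          intro k' hk'
          have hne : k' ≠ k := by
            rintro rfl
            exact hnotmem i hi ((hmemiff i).mp hk')
          exact update_of_ne hne t x
        have hCS : ∫⁻ t, f i₀ (update x k t) * f i₁ (update x k t) ∂μ
            ≤ g i₀ x * g i₁ x := by
          have hconj : Real.HolderConjugate 2 2 := Real.HolderConjugate.two_two
          have hm0 : Measurable fun t => f i₀ (update x k t) :=
            (hmf i₀).comp (measurable_update x)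
          have hm1 : Measurable fun t => f i₁ (update x k t) :=
            (hmf i₁).comp (measurable_update x)
          have := ENNReal.lintegral_mul_le_Lp_mul_Lq μ hconj
            hm0.aemeasurable hm1.aemeasurable
          simp only [Pi.mul_apply, Function.comp] at this
          refine this.trans (le_of_eq ?_)
          simp only [hgdef, if_pos (Or.inl rfl), if_pos (Or.inr rfl), lmarginal_singleton]
        calc ∫⁻ t, (fun y => ∏ i, f i y) (update x k t) ∂μ
            = ∫⁻ t, (∏ i ∈ Finset.univ \ {i₀, i₁}, f i x) *
                (f i₀ (update x k t) * f i₁ (update x k t)) ∂μ := by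
              congr 1; funext t
              show ∏ i, f i (update x k t) = _
              rw [hsplit (fun i => f i (update x k t))]
              congr 1
              exact Finset.prod_congr rfl fun i hi => hrest t i hi
          _ = (∏ i ∈ Finset.univ \ {i₀, i₁}, f i x) *
                ∫⁻ t, f i₀ (update x k t) * f i₁ (update x k t) ∂μ :=
              lintegral_const_mul _
                (((hmf i₀).comp (measurable_update x)).mul
                  ((hmf i₁).comp (measurable_update x)) :
                  Measurable fun t => f i₀ (update x k t) * f i₁ (update x k t))
          _ ≤ (∏ i ∈ Finset.univ \ {i₀, i₁}, f i x) * (g i₀ x * g i₁ x) :=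
              mul_le_mul_right hCS _
          _ = ∏ i, g i x := by
              rw [hsplit (fun i => g i x)]
              congr 1
              · refine Finset.prod_congr rfl fun i hi => ?_
                simp only [hgdef, if_neg (hnotmem i hi)]
      have hgmeas : ∀ i, Measurable (g i) := by
        intro i
        by_cases h : i = i₀ ∨ i = i₁
        · simp only [hgdef, if_pos h]
          exact (Measurable.lmarginal _ ((hmf i).pow_const _)).pow_const _
        · simp only [hgdef, if_neg h]; exact hmf i
      have hgdep : ∀ i (x y : ι → Z), (∀ k' ∈ b' i, x k' = y k') → g i x = g i y := by
        intro i x y hxy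
        by_cases h : i = i₀ ∨ i = i₁
        · simp only [hgdef, if_pos h, lmarginal_singleton]
          congr 1
          refine lintegral_congr fun t => ?_
          congr 1
          apply hdep
          intro k' hk'
          rcases eq_or_ne k' k with rfl | hne
          · rw [update_self, update_self]
          · rw [update_of_ne hne, update_of_ne hne]
            apply hxy
            simp only [hb'def, if_pos h]
            exact Finset.mem_erase.mpr ⟨hne, hk'⟩
        · simp only [hgdef, if_neg h]
          apply hdep
          intro k' hk'
          apply hxy
          simp only [hb'def, if_neg h]
          exact hk'
      have hgsub : ∀ i, b' i ⊆ s.erase k := by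
        intro i
        by_cases h : i = i₀ ∨ i = i₁
        · simp only [hb'def, if_pos h]
          exact Finset.erase_subset_erase k (hsub i)
        · simp only [hb'def, if_neg h]
          exact Finset.subset_erase.mpr ⟨hsub i, fun hkk => h ((hmemiff i).mp hkk)⟩
      have hgtwo : ∀ k' ∈ s.erase k, (Finset.univ.filter fun i => k' ∈ b' i).card = 2 := by
        intro k' hk'
        obtain ⟨hne, hk's⟩ := Finset.mem_erase.mp hk'
        have heq : (Finset.univ.filter fun i => k' ∈ b' i)
            = Finset.univ.filter fun i => k' ∈ b i := by
          apply Finset.filter_congr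
          intro i _
          by_cases h : i = i₀ ∨ i = i₁
          · simp [hb'def, if_pos h, Finset.mem_erase, hne]
          · simp [hb'def, if_neg h]
        rw [heq]; exact htwo k' hk's
      have hsdiff : s.erase k ⊂ s := Finset.erase_ssubset hk
      calc (lmarginal (fun _ => μ) s fun y => ∏ i, f i y) z
          = (lmarginal (fun _ => μ) (s.erase k)
              (fun x => ∫⁻ t, (fun y => ∏ i, f i y) (update x k t) ∂μ)) z := by
            conv_lhs => rw [← Finset.insert_erase hk]
            rw [lmarginal_insert' _ hprod (Finset.notMem_erase k s)]
        _ ≤ (lmarginal (fun _ => μ) (s.erase k) (fun x => ∏ i, g i x)) z :=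
            lmarginal_mono key z
        _ ≤ ∏ i, ((lmarginal (fun _ => μ) (b' i) (fun y => g i y ^ (2:ℝ))) z) ^ (1/2:ℝ) :=
            ih _ hsdiff b' g hgmeas hgdep hgsub hgtwo z
        _ = ∏ i, ((lmarginal (fun _ => μ) (b i) (fun y => f i y ^ (2:ℝ))) z) ^ (1/2:ℝ) := by
            refine Finset.prod_congr rfl fun i _ => ?_
            by_cases h : i = i₀ ∨ i = i₁
            · have h2 : (fun y => g i y ^ (2:ℝ))
                  = lmarginal (fun _ => μ) {k} (fun y => f i y ^ (2:ℝ)) := by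
                funext y
                simp only [hgdef, if_pos h]
                rw [← ENNReal.rpow_mul]
                norm_num
              have hkb : k ∈ b i := (hmemiff i).mpr h
              have hbi : b i = (b i).erase k ∪ {k} := by
                rw [Finset.union_comm, ← Finset.insert_eq, Finset.insert_erase hkb]
              simp only [hb'def, if_pos h, h2]
              conv_rhs => rw [hbi, lmarginal_union (fun _ => μ) _ ((hmf i).pow_const _)
                (Finset.disjoint_singleton_right.mpr (Finset.notMem_erase k _))]
            · simp only [hb'def, hgdef, if_neg h]

theorem gcs_qmp {Z : Type*} [MeasurableSpace Z] (μ : Measure Z) [SigmaFinite μ]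
    {ι : Type*} [Fintype ι] (b : Finset ι) :
    Measure.QuasiMeasurePreserving (fun (z : ι → Z) (k : ↥b) => z k.1)
      (Measure.pi fun _ : ι => μ) (Measure.pi fun _ : ↥b => μ) := by
  classical
  have hm : Measurable fun (z : ι → Z) (k : ↥b) => z k.1 :=
    measurable_pi_lambda _ fun k => measurable_pi_apply k.1
  refine ⟨hm, Measure.AbsolutelyContinuous.mk fun N hN h0 => ?_⟩
  rw [Measure.map_apply hm hN]
  have he := MeasureTheory.measurePreserving_piEquivPiSubtypeProd
    (fun _ : ι => μ) (fun i => i ∈ b)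
  have hpre : (fun (z : ι → Z) (k : ↥b) => z k.1) ⁻¹' N
      = (MeasurableEquiv.piEquivPiSubtypeProd (fun _ : ι => Z) (fun i => i ∈ b)) ⁻¹'
        (N ×ˢ Set.univ) := by
    ext z
    simp [MeasurableEquiv.piEquivPiSubtypeProd, Equiv.piEquivPiSubtypeProd]
  rw [hpre, he.measure_preimage_equiv, Measure.prod_prod]
  refine mul_eq_zero_of_left ?_ _
  convert h0 using 2
  congr!

theorem generalized_cauchy_schwarz
    {Z : Type*} [MeasurableSpace Z] (μ : Measure Z) [SigmaFinite μ]
    (B q : ℕ) (hB : 2 ≤ B) (hq : 2 ≤ q)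
    (b : Fin q → Finset (Fin B))
    (hne : ∀ i, (b i).Nonempty)
    (hcover : ∀ k : Fin B, ∃ i, k ∈ b i)
    (htwo : ∀ k : Fin B, (Finset.univ.filter fun i => k ∈ b i).card = 2)
    (F : (i : Fin q) → (↥(b i) → Z) → ℝ)
    (hF : ∀ i, MemLp (F i) 2 (Measure.pi fun _ : ↥(b i) => μ)) :
    ∫ z : Fin B → Z, ∏ i, |F i (fun k => z k.1)| ∂(Measure.pi fun _ => μ)
      ≤ ∏ i, (eLpNorm (F i) 2 (Measure.pi fun _ : ↥(b i) => μ)).toReal := by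
  classical
  have hRHS0 : 0 ≤ ∏ i, (eLpNorm (F i) 2 (Measure.pi fun _ : ↥(b i) => μ)).toReal :=
    Finset.prod_nonneg fun i _ => ENNReal.toReal_nonneg
  rcases isEmpty_or_nonempty Z with hZ | hZ
  · have hBpos : 0 < B := lt_of_lt_of_le two_pos hB
    have hE : IsEmpty (Fin B → Z) := ⟨fun z => (hZ.false (z ⟨0, hBpos⟩)).elim⟩
    have h0 : (Measure.pi fun _ : Fin B => μ) = 0 := Subsingleton.elim _ _
    rw [h0, integral_zero_measure]
    exact hRHS0
  · set ν := Measure.pi fun _ : Fin B => μ with hν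
    have hqmp : ∀ i, Measure.QuasiMeasurePreserving
        (fun (z : Fin B → Z) (k : ↥(b i)) => z k.1) ν (Measure.pi fun _ : ↥(b i) => μ) :=
      fun i => gcs_qmp μ (b i)
    set G : (i : Fin q) → (↥(b i) → Z) → ℝ := fun i => (hF i).1.mk (F i) with hGdef
    have hGsm : ∀ i, StronglyMeasurable (G i) := fun i => (hF i).1.stronglyMeasurable_mk
    have hGae : ∀ i, F i =ᵐ[Measure.pi fun _ : ↥(b i) => μ] G i := fun i => (hF i).1.ae_eq_mk
    have hproj : ∀ i, Measurable (fun (z : Fin B → Z) (k : ↥(b i)) => z k.1) :=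
      fun i => measurable_pi_lambda _ fun k => measurable_pi_apply k.1
    set f : Fin q → (Fin B → Z) → ℝ≥0∞ :=
      fun i z => (‖G i (fun k => z k.1)‖₊ : ℝ≥0∞) with hfdef
    have hmf : ∀ i, Measurable (f i) :=
      fun i => ((hGsm i).measurable.comp (hproj i)).enorm
    have hdep : ∀ i (x y : Fin B → Z), (∀ k ∈ b i, x k = y k) → f i x = f i y := by
      intro i x y hxy
      have hxy' : (fun k : ↥(b i) => x k.1) = fun k => y k.1 :=
        funext fun k => hxy k.1 k.2
      simp only [hfdef, hxy']
    -- apply the core lemma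
    obtain ⟨z₀⟩ : Nonempty (Fin B → Z) := ⟨fun _ => Classical.arbitrary Z⟩
    have hcore := gcs_core μ Finset.univ b f hmf hdep (fun i => Finset.subset_univ _)
      (fun k _ => htwo k) z₀
    rw [← lintegral_eq_lmarginal_univ z₀] at hcore
    have hRHSeq : ∀ i, ((lmarginal (fun _ => μ) (b i) (fun y => f i y ^ (2:ℝ))) z₀) ^ (1/2:ℝ)
        = eLpNorm (F i) 2 (Measure.pi fun _ : ↥(b i) => μ) := by
      intro i
      rw [eLpNorm_congr_ae (hGae i)]
      rw [eLpNorm_eq_lintegral_rpow_enorm_toReal (by norm_num) (by norm_num)]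
      have htr : (2 : ℝ≥0∞).toReal = (2:ℝ) := by norm_num
      rw [htr]
      congr 1
      simp only [lmarginal]
      refine lintegral_congr fun y => ?_
      have hyy : (fun k : ↥(b i) => Function.updateFinset z₀ (b i) y k.1) = y := by
        funext k
        simp [Function.updateFinset, k.2]
      simp only [hfdef, hyy]
      rfl
    simp only [hRHSeq] at hcore
    -- hcore : ∫⁻ z, ∏ i, f i z ∂ν ≤ ∏ i, eLpNorm (F i) 2 _
    have hRne : (∏ i, eLpNorm (F i) 2 (Measure.pi fun _ : ↥(b i) => μ)) ≠ ∞ :=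
      (ENNReal.prod_lt_top fun i _ => (hF i).2).ne
    have hae : ∀ i, (fun z : Fin B → Z => F i (fun k => z k.1))
        =ᵐ[ν] (fun z => G i (fun k => z k.1)) :=
      fun i => (hqmp i).ae_eq (hGae i)
    have haeall : ∀ᵐ z ∂ν, ∀ i, F i (fun k => z k.1) = G i (fun k => z k.1) :=
      ae_all_iff.mpr hae
    have hprodae : (fun z : Fin B → Z => ∏ i, |F i (fun k => z k.1)|)
        =ᵐ[ν] (fun z => ∏ i, |G i (fun k => z k.1)|) := by
      filter_upwards [haeall] with z hz
      exact Finset.prod_congr rfl fun i _ => by rw [hz i]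
    have hofReal : ∀ z : Fin B → Z,
        ENNReal.ofReal (∏ i, |G i (fun k => z k.1)|) = ∏ i, f i z := by
      intro z
      rw [ENNReal.ofReal_prod_of_nonneg fun i _ => abs_nonneg _]
      exact Finset.prod_congr rfl fun i _ => by
        simp only [hfdef]; rw [← Real.enorm_eq_ofReal_abs, enorm_eq_nnnorm]
    have hGm : AEStronglyMeasurable (fun z : Fin B → Z => ∏ i, |G i (fun k => z k.1)|) ν :=
      (Finset.measurable_prod _ fun i _ =>
        ((hGsm i).measurable.comp (hproj i)).abs).aestronglyMeasurable
    have hFm : AEStronglyMeasurable (fun z : Fin B → Z => ∏ i, |F i (fun k => z k.1)|) ν :=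
      hGm.congr hprodae.symm
    have hnonneg : 0 ≤ᵐ[ν] fun z : Fin B → Z => ∏ i, |F i (fun k => z k.1)| :=
      Filter.Eventually.of_forall fun z => Finset.prod_nonneg fun i _ => abs_nonneg _
    rw [integral_eq_lintegral_of_nonneg_ae hnonneg hFm]
    have hlim : ∫⁻ z, ENNReal.ofReal (∏ i, |F i (fun k => z k.1)|) ∂ν
        = ∫⁻ z, ∏ i, f i z ∂ν := by
      refine lintegral_congr_ae ?_
      filter_upwards [hprodae] with z hz
      rw [hz, hofReal z]
    rw [hlim]
    rw [← ENNReal.toReal_prod]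
    exact ENNReal.toReal_mono hRne hcore
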